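/- Dimension lower bound for growth: Let 𝕂 be a field, G a group, and S ⊆ G a finite subset such that S ∪ S⁻¹ generates G. Let ϖ denote the augmentation ideal of the group algebra 𝕂[G], namely the kernel of the 𝕂-algebra homomorphism 𝕂[G] → 𝕂 sending every g ∈ G to 1, and set ϖ⁰ = 𝕂[G]. Then for every n ∈ ℕ, each quotient ϖ^i/ϖ^{i+1} for 0 ≤ i ≤ n is a finite-dimensional 𝕂-vector space, and v_{G,S∪S⁻¹}(n) ≥ Σ_{i=0}^{n} dim_𝕂(ϖ^i/ϖ^{i+1}). -/

import Mathlib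

/-- The word norm of `g` with respect to a generating set `S`. -/
noncomputable def wordNorm {G : Type*} [Group G] (S : Set G) (g : G) : ℕ :=
  sInf {n | ∃ l : List G, (∀ s ∈ l, s ∈ S) ∧ l.length = n ∧ l.prod = g}

/-- The growth function `v_{G,S}(n) = #{g : ‖g‖_S ≤ n}`. -/
noncomputable def growthFn {G : Type*} [Group G] (S : Set G) (n : ℕ) : ℕ :=
  Nat.card {g : G // wordNorm S g ≤ n}

/-- The augmentation map `𝕂[G] → 𝕂`, the algebra homomorphism sending each `g ∈ G` to `1`. -/
noncomputable def augmentation (𝕂 G : Type*) [Field 𝕂] [Group G] :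
    MonoidAlgebra 𝕂 G →ₐ[𝕂] 𝕂 :=
  (MonoidAlgebra.lift 𝕂 𝕂 G) 1

/-- `augPow 𝕂 G n` is the `n`-th power `ϖ^n` of the augmentation ideal
`ϖ = ker(𝕂[G] → 𝕂)` (as a `𝕂`-submodule of `𝕂[G]`), with the convention `ϖ⁰ = 𝕂[G]`. -/
noncomputable def augPow (𝕂 G : Type*) [Field 𝕂] [Group G] (n : ℕ) :
    Submodule 𝕂 (MonoidAlgebra 𝕂 G) :=
  if n = 0 then ⊤ else (LinearMap.ker (augmentation 𝕂 G).toLinearMap) ^ n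

/-- The quotient `ϖ^i / ϖ^{i+1}` as a `𝕂`-module. -/
noncomputable abbrev augQuot (𝕂 G : Type*) [Field 𝕂] [Group G] (i : ℕ) :=
  ↥(augPow 𝕂 G i) ⧸ Submodule.comap (augPow 𝕂 G i).subtype (augPow 𝕂 G (i + 1))

namespace AugGrowthAux

/-! ### Algebra lemmas -/

noncomputable def aker (𝕂 G : Type*) [Field 𝕂] [Group G] : Submodule 𝕂 (MonoidAlgebra 𝕂 G) :=
  LinearMap.ker (augmentation 𝕂 G).toLinearMap

variable (𝕂 : Type*) [Field 𝕂] {G : Type*} [Group G]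

lemma aug_of (g : G) : augmentation 𝕂 G (MonoidAlgebra.of 𝕂 G g) = 1 := by
  simp [augmentation]

lemma augPow_zero : augPow 𝕂 G 0 = ⊤ := if_pos rfl

lemma augPow_succ (n : ℕ) : augPow 𝕂 G (n + 1) = aker 𝕂 G ^ (n + 1) :=
  if_neg (Nat.succ_ne_zero n)

lemma mem_aker_iff (x : MonoidAlgebra 𝕂 G) : x ∈ aker 𝕂 G ↔ augmentation 𝕂 G x = 0 := by
  simp [aker, LinearMap.mem_ker]

lemma aker_mul (a x : MonoidAlgebra 𝕂 G) (ha : a ∈ aker 𝕂 G) : a * x ∈ aker 𝕂 G := by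
  rw [mem_aker_iff] at ha ⊢
  rw [map_mul, ha, zero_mul]

lemma aker_pow_succ_le (k : ℕ) : aker 𝕂 G ^ (k + 2) ≤ aker 𝕂 G ^ (k + 1) := by
  induction k with
  | zero =>
    rw [pow_two, pow_one]
    exact Submodule.mul_le.2 fun a ha x _ => aker_mul 𝕂 a x ha
  | succ k ih =>
    calc aker 𝕂 G ^ (k + 1 + 2) = aker 𝕂 G * aker 𝕂 G ^ (k + 2) := pow_succ' _ _
      _ ≤ aker 𝕂 G * aker 𝕂 G ^ (k + 1) := mul_le_mul' le_rfl ih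
      _ = aker 𝕂 G ^ (k + 1 + 1) := (pow_succ' _ _).symm

lemma augPow_succ_le (k : ℕ) : augPow 𝕂 G (k + 1) ≤ augPow 𝕂 G k := by
  cases k with
  | zero => rw [augPow_zero]; exact le_top
  | succ k => rw [augPow_succ, augPow_succ]; exact aker_pow_succ_le 𝕂 k

lemma mul_mem_augPow_succ (a w : MonoidAlgebra 𝕂 G) (ha : a ∈ aker 𝕂 G) (j : ℕ)
    (hw : w ∈ augPow 𝕂 G (j + 1)) : a * w ∈ augPow 𝕂 G (j + 2) := by
  rw [augPow_succ] at hw ⊢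
  have h : aker 𝕂 G ^ (j + 2) = aker 𝕂 G * aker 𝕂 G ^ (j + 1) := pow_succ' _ _
  rw [h]
  exact Submodule.mul_mem_mul ha hw

lemma of_sub_one_mem_aker (s : G) :
    MonoidAlgebra.of 𝕂 G s - 1 ∈ aker 𝕂 G := by
  rw [mem_aker_iff, map_sub, map_one, aug_of, sub_self]

/-! ### Word norm lemmas -/

variable {S : Set G}

lemma hrep (hgen : Subgroup.closure (S ∪ S⁻¹) = ⊤) (g : G) :
    ∃ l : List G, (∀ x ∈ l, x ∈ S ∪ S⁻¹) ∧ l.prod = g := by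
  have hsym : (S ∪ S⁻¹)⁻¹ = S ∪ S⁻¹ := by ext x; simp [or_comm]
  have hg : g ∈ Submonoid.closure (S ∪ S⁻¹) := by
    have : g ∈ (Subgroup.closure (S ∪ S⁻¹)).toSubmonoid := by
      rw [hgen]; trivial
    rwa [Subgroup.closure_toSubmonoid, hsym, Set.union_self] at this
  exact Submonoid.exists_list_of_mem_closure hg

lemma wordNorm_le_length (l : List G) (hl : ∀ x ∈ l, x ∈ S) :
    wordNorm S l.prod ≤ l.length :=
  Nat.sInf_le ⟨l, hl, rfl, rfl⟩

lemma exists_list_wordNorm (hgen : Subgroup.closure (S ∪ S⁻¹) = ⊤) (g : G) :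
    ∃ l : List G, (∀ x ∈ l, x ∈ S ∪ S⁻¹) ∧ l.length = wordNorm (S ∪ S⁻¹) g ∧ l.prod = g := by
  obtain ⟨l, hl, hp⟩ := hrep hgen g
  have hne : {n | ∃ l : List G, (∀ x ∈ l, x ∈ S ∪ S⁻¹) ∧ l.length = n ∧ l.prod = g}.Nonempty :=
    ⟨l.length, l, hl, rfl, hp⟩
  exact Nat.sInf_mem hne

lemma wordNorm_one_le (n : ℕ) : wordNorm S (1 : G) ≤ n :=
  le_trans (by simpa using wordNorm_le_length (S := S) [] (by simp)) (Nat.zero_le n)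

lemma wordNorm_mul_le (hgen : Subgroup.closure (S ∪ S⁻¹) = ⊤) (s g : G)
    (hs : s ∈ S ∪ S⁻¹) :
    wordNorm (S ∪ S⁻¹) (s * g) ≤ wordNorm (S ∪ S⁻¹) g + 1 := by
  obtain ⟨l, hl, hlen, hp⟩ := exists_list_wordNorm hgen g
  have hmem : ∀ x ∈ s :: l, x ∈ S ∪ S⁻¹ := by
    intro x hx
    rcases List.mem_cons.1 hx with h | h
    · exact h ▸ hs
    · exact hl x h
  have := wordNorm_le_length (S := S ∪ S⁻¹) (s :: l) hmem
  simpa [hp, hlen] using this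

lemma ball_finite (hfin : S.Finite) (hgen : Subgroup.closure (S ∪ S⁻¹) = ⊤) (n : ℕ) :
    {g : G | wordNorm (S ∪ S⁻¹) g ≤ n}.Finite := by
  have hT : (S ∪ S⁻¹).Finite := hfin.union hfin.inv
  have : Finite ↥(S ∪ S⁻¹) := hT
  have hL : {l : List ↥(S ∪ S⁻¹) | l.length ≤ n}.Finite := List.finite_length_le _ n
  apply Set.Finite.subset (hL.image fun l => (l.map Subtype.val).prod)
  intro g hg
  obtain ⟨l, hl, hlen, hp⟩ := exists_list_wordNorm hgen g
  refine ⟨l.pmap (fun x hx => (⟨x, hx⟩ : ↥(S ∪ S⁻¹))) hl, by simpa [hlen] using hg, ?_⟩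
  simp only [List.map_pmap]
  simpa [List.pmap_eq_map] using hp

/-! ### The key span lemma -/

/-- span of the ball of radius `j` in the monoid algebra. -/
noncomputable def ballSpan (n : ℕ) : Submodule 𝕂 (MonoidAlgebra 𝕂 G) :=
  Submodule.span 𝕂 (MonoidAlgebra.of 𝕂 G '' {g : G | wordNorm (S ∪ S⁻¹) g ≤ n})

lemma ballSpan_mono {i j : ℕ} (h : i ≤ j) :
    (ballSpan 𝕂 (S := S) i) ≤ ballSpan 𝕂 (S := S) j :=
  Submodule.span_mono (Set.image_mono fun g hg => le_trans hg h)

lemma key (hgen : Subgroup.closure (S ∪ S⁻¹) = ⊤) :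
    ∀ l : List G, (∀ x ∈ l, x ∈ S ∪ S⁻¹) → ∀ j : ℕ,
      (MonoidAlgebra.of 𝕂 G l.prod : MonoidAlgebra 𝕂 G)
        ∈ ballSpan 𝕂 (S := S) j ⊔ augPow 𝕂 G (j + 1) := by
  intro l
  induction l with
  | nil =>
    intro _ j
    apply Submodule.mem_sup_left
    apply Submodule.subset_span
    exact ⟨1, wordNorm_one_le j, by simp⟩
  | cons s l ih =>
    intro hmem j
    have hs : s ∈ S ∪ S⁻¹ := hmem s List.mem_cons_self
    have hl : ∀ x ∈ l, x ∈ S ∪ S⁻¹ := fun x hx => hmem x (List.mem_cons_of_mem s hx)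
    set x : MonoidAlgebra 𝕂 G := MonoidAlgebra.of 𝕂 G l.prod with hx
    have hsplit : (MonoidAlgebra.of 𝕂 G (s :: l).prod : MonoidAlgebra 𝕂 G)
        = x + (MonoidAlgebra.of 𝕂 G s - 1) * x := by
      rw [List.prod_cons, map_mul]
      noncomm_ring
    rw [hsplit]
    apply Submodule.add_mem _ (ih hl j)
    -- now show (of s - 1) * x ∈ ballSpan j ⊔ augPow (j+1)
    cases j with
    | zero =>
      apply Submodule.mem_sup_right
      rw [augPow_succ, pow_one]
      exact aker_mul 𝕂 _ x (of_sub_one_mem_aker 𝕂 s)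
    | succ j =>
      obtain ⟨m, hm, w, hw, hmw⟩ := Submodule.mem_sup.1 (ih hl j)
      have hxd : (MonoidAlgebra.of 𝕂 G s - 1) * x
          = (MonoidAlgebra.of 𝕂 G s * m - m) + (MonoidAlgebra.of 𝕂 G s - 1) * w := by
        rw [← hmw]; noncomm_ring
      rw [hxd]
      apply Submodule.add_mem
      · apply Submodule.mem_sup_left
        apply Submodule.sub_mem
        · -- of s * m ∈ ballSpan (j+1)
          have hmap : Submodule.map (LinearMap.mulLeft 𝕂 (MonoidAlgebra.of 𝕂 G s))
              (ballSpan 𝕂 (S := S) j) ≤ ballSpan 𝕂 (S := S) (j + 1) := by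
            rw [ballSpan, Submodule.map_span]
            apply Submodule.span_le.2
            rintro _ ⟨_, ⟨g, hg, rfl⟩, rfl⟩
            apply Submodule.subset_span
            refine ⟨s * g, ?_, by simp [LinearMap.mulLeft_apply]⟩
            exact le_trans (wordNorm_mul_le hgen s g hs) (Nat.add_le_add_right hg 1)
          exact hmap ⟨m, hm, rfl⟩
        · exact ballSpan_mono 𝕂 (Nat.le_succ j) hm
      · exact Submodule.mem_sup_right
          (mul_mem_augPow_succ 𝕂 _ w (of_sub_one_mem_aker 𝕂 s) j hw)

lemma top_le_sup (hgen : Subgroup.closure (S ∪ S⁻¹) = ⊤) (n : ℕ) :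
    ballSpan 𝕂 (S := S) n ⊔ augPow 𝕂 G (n + 1) = ⊤ := by
  rw [eq_top_iff]
  intro x _
  refine Submodule.span_le.2 ?_ (MonoidAlgebra.mem_span_support x)
  rintro _ ⟨g, _, rfl⟩
  obtain ⟨l, hl, hp⟩ := hrep hgen g
  exact hp ▸ key 𝕂 hgen l hl n

end AugGrowthAux

namespace AugGrowthAux

variable (𝕂 : Type*) [Field 𝕂] {G : Type*} [Group G] {S : Set G}

lemma quot_fd_and_bound (hfin : S.Finite) (hgen : Subgroup.closure (S ∪ S⁻¹) = ⊤) (n : ℕ) :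
    FiniteDimensional 𝕂 (MonoidAlgebra 𝕂 G ⧸ augPow 𝕂 G (n + 1)) ∧
    Module.finrank 𝕂 (MonoidAlgebra 𝕂 G ⧸ augPow 𝕂 G (n + 1)) ≤ growthFn (S ∪ S⁻¹) n := by
  classical
  set B := (ball_finite hfin hgen n).toFinset with hB
  set imgF : Finset (MonoidAlgebra 𝕂 G ⧸ augPow 𝕂 G (n + 1)) :=
    (B.image fun g => (MonoidAlgebra.of 𝕂 G g : MonoidAlgebra 𝕂 G)).image
      (augPow 𝕂 G (n + 1)).mkQ with himgF
  have hcoe : (↑imgF : Set (MonoidAlgebra 𝕂 G ⧸ augPow 𝕂 G (n + 1)))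
      = (augPow 𝕂 G (n + 1)).mkQ ''
        (MonoidAlgebra.of 𝕂 G '' {g : G | wordNorm (S ∪ S⁻¹) g ≤ n}) := by
    ext q
    simp [himgF, hB, Set.Finite.mem_toFinset]
  have hspan : Submodule.span 𝕂 (↑imgF : Set (MonoidAlgebra 𝕂 G ⧸ augPow 𝕂 G (n + 1))) = ⊤ := by
    have h1 : Submodule.map (augPow 𝕂 G (n + 1)).mkQ
        (ballSpan 𝕂 (S := S) n ⊔ augPow 𝕂 G (n + 1)) = ⊤ := by
      rw [top_le_sup 𝕂 hgen n, Submodule.map_top, Submodule.range_mkQ]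
    rw [Submodule.map_sup, Submodule.mkQ_map_self, sup_bot_eq, ballSpan,
      Submodule.map_span] at h1
    rw [hcoe, h1]
  have hfd : FiniteDimensional 𝕂 (MonoidAlgebra 𝕂 G ⧸ augPow 𝕂 G (n + 1)) := by
    have h2 : FiniteDimensional 𝕂 ↥(Submodule.span 𝕂 (↑imgF : Set (MonoidAlgebra 𝕂 G ⧸ augPow 𝕂 G (n + 1)))) :=
      FiniteDimensional.span_of_finite 𝕂 imgF.finite_toSet
    rw [hspan] at h2
    haveI := h2
    exact Submodule.topEquiv.finiteDimensional
  refine ⟨hfd, ?_⟩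
  have h3 : Module.finrank 𝕂 (MonoidAlgebra 𝕂 G ⧸ augPow 𝕂 G (n + 1))
      = Module.finrank 𝕂
        ↥(Submodule.span 𝕂 (↑imgF : Set (MonoidAlgebra 𝕂 G ⧸ augPow 𝕂 G (n + 1)))) := by
    rw [hspan, finrank_top]
  have h4 := finrank_span_finset_le_card (R := 𝕂) imgF
  have h5 : imgF.card ≤ B.card := le_trans Finset.card_image_le Finset.card_image_le
  have h6 : growthFn (S ∪ S⁻¹) n = B.card := by
    have h7 : growthFn (S ∪ S⁻¹) n
        = Nat.card ↥{g : G | wordNorm (S ∪ S⁻¹) g ≤ n} := rfl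
    rw [h7, Nat.card_coe_set_eq,
      Set.ncard_eq_toFinset_card _ (ball_finite hfin hgen n)]
  rw [h3, h6]
  rw [Set.finrank] at h4
  omega

lemma sum_finrank_eq (hfin : S.Finite) (hgen : Subgroup.closure (S ∪ S⁻¹) = ⊤) :
    ∀ m : ℕ, ∑ i ∈ Finset.range m, Module.finrank 𝕂 (augQuot 𝕂 G i)
      = Module.finrank 𝕂 (MonoidAlgebra 𝕂 G ⧸ augPow 𝕂 G m) := by
  intro m
  induction m with
  | zero =>
    haveI : Subsingleton (MonoidAlgebra 𝕂 G ⧸ augPow 𝕂 G 0) :=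
      Submodule.Quotient.subsingleton_iff.2 (augPow_zero 𝕂)
    simp [Module.finrank_zero_of_subsingleton]
  | succ m ih =>
    haveI hFD : FiniteDimensional 𝕂 (MonoidAlgebra 𝕂 G ⧸ augPow 𝕂 G (m + 1)) :=
      (quot_fd_and_bound 𝕂 hfin hgen m).1
    set f : (MonoidAlgebra 𝕂 G ⧸ augPow 𝕂 G (m + 1)) →ₗ[𝕂]
        (MonoidAlgebra 𝕂 G ⧸ augPow 𝕂 G m) :=
      Submodule.liftQ (augPow 𝕂 G (m + 1)) (augPow 𝕂 G m).mkQ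
        (by rw [Submodule.ker_mkQ]; exact augPow_succ_le 𝕂 m) with hf
    have hsurj : Function.Surjective f := by
      intro y
      obtain ⟨x, rfl⟩ := Submodule.mkQ_surjective _ y
      exact ⟨Submodule.Quotient.mk x, rfl⟩
    have hrank := LinearMap.finrank_range_add_finrank_ker f
    have hr : LinearMap.range f = ⊤ := LinearMap.range_eq_top.2 hsurj
    have hk : LinearMap.ker f = Submodule.map (augPow 𝕂 G (m + 1)).mkQ (augPow 𝕂 G m) := by
      rw [hf, Submodule.ker_liftQ, Submodule.ker_mkQ]
    set g : ↥(augPow 𝕂 G m) →ₗ[𝕂] (MonoidAlgebra 𝕂 G ⧸ augPow 𝕂 G (m + 1)) :=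
      ((augPow 𝕂 G (m + 1)).mkQ).comp (augPow 𝕂 G m).subtype with hg
    have hkg : LinearMap.ker g = Submodule.comap (augPow 𝕂 G m).subtype (augPow 𝕂 G (m + 1)) := by
      rw [hg, LinearMap.ker_comp, Submodule.ker_mkQ]
    have hrg : LinearMap.range g = Submodule.map (augPow 𝕂 G (m + 1)).mkQ (augPow 𝕂 G m) := by
      rw [hg, LinearMap.range_comp, Submodule.range_subtype]
    have e : augQuot 𝕂 G m ≃ₗ[𝕂] ↥(LinearMap.ker f) :=
      (Submodule.quotEquivOfEq _ _ hkg.symm).trans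
        (g.quotKerEquivRange.trans (LinearEquiv.ofEq _ _ (hrg.trans hk.symm)))
    have hq : Module.finrank 𝕂 (augQuot 𝕂 G m) = Module.finrank 𝕂 ↥(LinearMap.ker f) :=
      e.finrank_eq
    have hrange : Module.finrank 𝕂 ↥(LinearMap.range f)
        = Module.finrank 𝕂 (MonoidAlgebra 𝕂 G ⧸ augPow 𝕂 G m) := by
      rw [hr, finrank_top]
    rw [Finset.sum_range_succ, ih, hq, ← hrange, ← hrank]

lemma augQuot_fd (hfin : S.Finite) (hgen : Subgroup.closure (S ∪ S⁻¹) = ⊤) (i : ℕ) :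
    FiniteDimensional 𝕂 (augQuot 𝕂 G i) := by
  haveI : FiniteDimensional 𝕂 (MonoidAlgebra 𝕂 G ⧸ augPow 𝕂 G (i + 1)) :=
    (quot_fd_and_bound 𝕂 hfin hgen i).1
  set g : ↥(augPow 𝕂 G i) →ₗ[𝕂] (MonoidAlgebra 𝕂 G ⧸ augPow 𝕂 G (i + 1)) :=
    ((augPow 𝕂 G (i + 1)).mkQ).comp (augPow 𝕂 G i).subtype with hg
  have hkg : LinearMap.ker g = Submodule.comap (augPow 𝕂 G i).subtype (augPow 𝕂 G (i + 1)) := by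
    rw [hg, LinearMap.ker_comp, Submodule.ker_mkQ]
  haveI : FiniteDimensional 𝕂 ↥(LinearMap.range g) :=
    FiniteDimensional.finiteDimensional_submodule (LinearMap.range g)
  have e : augQuot 𝕂 G i ≃ₗ[𝕂] ↥(LinearMap.range g) :=
    (Submodule.quotEquivOfEq _ _ hkg.symm).trans g.quotKerEquivRange
  exact e.symm.finiteDimensional

end AugGrowthAux

/-- **Dimension lower bound for growth**: let `𝕂` be a field, `G` a group and `S` a finite
subset with `S ∪ S⁻¹` generating `G`. Then each quotient `ϖ^i/ϖ^{i+1}` of consecutive powers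
of the augmentation ideal of `𝕂[G]` is finite-dimensional, and
`v_{G,S∪S⁻¹}(n) ≥ Σ_{i=0}^{n} dim_𝕂 (ϖ^i/ϖ^{i+1})`. -/
theorem growth_ge_sum_dim_augmentation_quotients
    (𝕂 : Type*) [Field 𝕂] {G : Type*} [Group G] (S : Set G)
    (hfin : S.Finite) (hgen : Subgroup.closure (S ∪ S⁻¹) = ⊤) :
    (∀ i : ℕ, FiniteDimensional 𝕂 (augQuot 𝕂 G i)) ∧
    ∀ n : ℕ,
      ∑ i ∈ Finset.range (n + 1), Module.finrank 𝕂 (augQuot 𝕂 G i)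
        ≤ growthFn (S ∪ S⁻¹) n := by
  constructor
  · exact AugGrowthAux.augQuot_fd 𝕂 hfin hgen
  · intro n
    rw [AugGrowthAux.sum_finrank_eq 𝕂 hfin hgen (n + 1)]
    exact (AugGrowthAux.quot_fd_and_bound 𝕂 hfin hgen n).2
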